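/- For positive integers L ≤ M ≤ N, the set of extreme points of D is exactly P; i.e., a matrix X ∈ D is an extreme point of D if and only if X ∈ P. -/

import Mathlib

open Matrix BigOperators

/-- The set `P` of partial permutation matrices: real `M × N` matrices with entries in `{0,1}`,
row sums at most 1, column sums at most 1, and total sum equal to `L`. -/
def PPM (L M N : ℕ) : Set (Matrix (Fin M) (Fin N) ℝ) :=
  {X | (∀ i j, X i j = 0 ∨ X i j = 1) ∧ (∀ i, ∑ j, X i j ≤ 1) ∧
       (∀ j, ∑ i, X i j ≤ 1) ∧ (∑ i, ∑ j, X i j) = (L : ℝ)}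

/-- The set `D`: real `M × N` matrices with nonnegative entries, row sums at most 1,
column sums at most 1, and total sum equal to `L`. -/
def DSet (L M N : ℕ) : Set (Matrix (Fin M) (Fin N) ℝ) :=
  {X | (∀ i j, 0 ≤ X i j) ∧ (∀ i, ∑ j, X i j ≤ 1) ∧
       (∀ j, ∑ i, X i j ≤ 1) ∧ (∑ i, ∑ j, X i j) = (L : ℝ)}

/-- The `k × k` all-ones matrix `J_k`. -/
def Jmat (k : ℕ) : Matrix (Fin k) (Fin k) ℝ := Matrix.of fun _ _ => 1

/-- A real number equal to an integer, lying in `[0,1]`, is `0` or `1`. -/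
lemma aux_int01 {x : ℝ} (z : ℤ) (hz : x = z) (h0 : 0 ≤ x) (h1 : x ≤ 1) :
    x = 0 ∨ x = 1 := by
  subst hz
  have hz0 : (0:ℤ) ≤ z := by exact_mod_cast h0
  have hz1 : z ≤ 1 := by exact_mod_cast h1
  interval_cases z <;> simp

/-- In a line with integer sum and entries in `[0,1]`, a fractional entry is not alone. -/
lemma exists_other_frac {ι : Type*} [Fintype ι] [DecidableEq ι] (f : ι → ℝ)
    (h0 : ∀ j, 0 ≤ f j) (h1 : ∀ j, f j ≤ 1) (z : ℤ) (hz : ∑ j, f j = z)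
    (j0 : ι) (hj0 : f j0 ≠ 0) (hj1 : f j0 ≠ 1) :
    ∃ j1, j1 ≠ j0 ∧ f j1 ≠ 0 ∧ f j1 ≠ 1 := by
  classical
  by_contra hcon
  push_neg at hcon
  have hsum : ∑ j ∈ Finset.univ.erase j0, f j
      = (((Finset.univ.erase j0)).filter (fun j => f j = 1)).card := by
    rw [← Finset.sum_boole]
    refine Finset.sum_congr rfl (fun j hj => ?_)
    by_cases h : f j = 1
    · simp [h]
    · have h2 : f j = 0 := by
        by_contra h3
        exact h (hcon j (Finset.ne_of_mem_erase hj) h3)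
      simp [h, h2]
  have hsplit : f j0 + ∑ j ∈ Finset.univ.erase j0, f j = (z:ℝ) := by
    rw [Finset.add_sum_erase _ f (Finset.mem_univ j0), hz]
  have : f j0 = ((z - (((Finset.univ.erase j0)).filter (fun j => f j = 1)).card : ℤ) : ℝ) := by
    push_cast
    rw [← hsum]
    linarith
  rcases aux_int01 _ this (h0 j0) (h1 j0) with h | h
  · exact hj0 h
  · exact hj1 h

set_option maxHeartbeats 2000000 in
/-- If `X ∈ D` has a fractional entry, it is not an extreme point of `D`. -/
lemma not_extremePoint_of_frac {L M N : ℕ} {X : Matrix (Fin M) (Fin N) ℝ}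
    (hX : X ∈ DSet L M N) {i0 : Fin M} {j0 : Fin N}
    (hf0 : X i0 j0 ≠ 0) (hf1 : X i0 j0 ≠ 1) :
    X ∉ Set.extremePoints ℝ (DSet L M N) := by
  classical
  obtain ⟨hpos, hrow, hcol, htot⟩ := hX
  -- the augmented matrix Y
  set Y : Matrix (Fin (M+1)) (Fin (N+1)) ℝ :=
    Fin.snoc (fun i : Fin M => Fin.snoc (X i) (1 - ∑ j, X i j))
      (Fin.snoc (fun j : Fin N => 1 - ∑ i, X i j) 0) with hYdef
  have hY11 : ∀ (i : Fin M) (j : Fin N), Y i.castSucc j.castSucc = X i j := by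
    intro i j; simp [hYdef]
  have hY1l : ∀ (i : Fin M), Y i.castSucc (Fin.last N) = 1 - ∑ j, X i j := by
    intro i; simp [hYdef]
  have hYl1 : ∀ (j : Fin N), Y (Fin.last M) j.castSucc = 1 - ∑ i, X i j := by
    intro j; simp [hYdef]
  have hYll : Y (Fin.last M) (Fin.last N) = 0 := by simp [hYdef]
  -- bounds on entries
  have hcolpos : ∀ j, (0:ℝ) ≤ ∑ i, X i j := fun j => Finset.sum_nonneg fun i _ => hpos i j
  have hrowpos : ∀ i, (0:ℝ) ≤ ∑ j, X i j := fun i => Finset.sum_nonneg fun j _ => hpos i j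
  have hXle1 : ∀ i j, X i j ≤ 1 := by
    intro i j
    exact le_trans (Finset.single_le_sum (fun j _ => hpos i j) (Finset.mem_univ j)) (hrow i)
  have hY0 : ∀ a b, 0 ≤ Y a b := by
    intro a b
    induction a using Fin.lastCases with
    | last =>
      induction b using Fin.lastCases with
      | last => rw [hYll]
      | cast j => rw [hYl1]; linarith [hcol j]
    | cast i =>
      induction b using Fin.lastCases with
      | last => rw [hY1l]; linarith [hrow i]
      | cast j => rw [hY11]; exact hpos i j
  have hY1 : ∀ a b, Y a b ≤ 1 := by
    intro a b
    induction a using Fin.lastCases with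
    | last =>
      induction b using Fin.lastCases with
      | last => rw [hYll]; norm_num
      | cast j => rw [hYl1]; linarith [hcolpos j]
    | cast i =>
      induction b using Fin.lastCases with
      | last => rw [hY1l]; linarith [hrowpos i]
      | cast j => rw [hY11]; exact hXle1 i j
  -- integer row/column sums
  have htot' : ∑ j, ∑ i, X i j = (L:ℝ) := by rw [Finset.sum_comm]; exact htot
  have hrowZ : ∀ a, ∃ z : ℤ, ∑ b, Y a b = (z:ℝ) := by
    intro a
    induction a using Fin.lastCases with
    | last =>
      refine ⟨(N:ℤ) - (L:ℤ), ?_⟩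
      rw [Fin.sum_univ_castSucc]
      simp only [hYl1, hYll]
      rw [Finset.sum_sub_distrib, htot']
      push_cast; simp
    | cast i =>
      refine ⟨1, ?_⟩
      rw [Fin.sum_univ_castSucc]
      simp only [hY11, hY1l]
      push_cast; ring
  have hcolZ : ∀ b, ∃ z : ℤ, ∑ a, Y a b = (z:ℝ) := by
    intro b
    induction b using Fin.lastCases with
    | last =>
      refine ⟨(M:ℤ) - (L:ℤ), ?_⟩
      rw [Fin.sum_univ_castSucc]
      simp only [hY1l, hYll]
      rw [Finset.sum_sub_distrib, htot]
      push_cast; simp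
    | cast j =>
      refine ⟨1, ?_⟩
      rw [Fin.sum_univ_castSucc]
      simp only [hY11, hYl1]
      push_cast; ring
  -- fractional support
  set Frac : Finset (Fin (M+1) × Fin (N+1)) :=
    Finset.univ.filter (fun p => Y p.1 p.2 ≠ 0 ∧ Y p.1 p.2 ≠ 1) with hFracdef
  have hFrac_mem : ∀ p : Fin (M+1) × Fin (N+1),
      p ∈ Frac ↔ (Y p.1 p.2 ≠ 0 ∧ Y p.1 p.2 ≠ 1) := by
    intro p; simp [hFracdef]
  have hp0 : (i0.castSucc, j0.castSucc) ∈ Frac := by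
    rw [hFrac_mem]; rw [hY11]; exact ⟨hf0, hf1⟩
  have hFne : Frac.Nonempty := ⟨_, hp0⟩
  -- each touched row/column meets Frac at least twice
  have hrow2 : ∀ a, (∃ b, (a, b) ∈ Frac) →
      2 ≤ (Frac.filter (fun p => p.1 = a)).card := by
    rintro a ⟨b, hb⟩
    obtain ⟨hb0, hb1⟩ := (hFrac_mem _).1 hb
    obtain ⟨z, hzz⟩ := hrowZ a
    obtain ⟨b', hb'ne, hb'0, hb'1⟩ := exists_other_frac (Y a) (hY0 a) (hY1 a) z hzz b hb0 hb1
    refine Finset.one_lt_card_iff.2 ⟨(a, b), (a, b'), ?_, ?_, ?_⟩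
    · exact Finset.mem_filter.2 ⟨hb, rfl⟩
    · exact Finset.mem_filter.2 ⟨(hFrac_mem _).2 ⟨hb'0, hb'1⟩, rfl⟩
    · intro h; exact hb'ne (congrArg Prod.snd h).symm
  have hcol2 : ∀ b, (∃ a, (a, b) ∈ Frac) →
      2 ≤ (Frac.filter (fun p => p.2 = b)).card := by
    rintro b ⟨a, ha⟩
    obtain ⟨ha0, ha1⟩ := (hFrac_mem _).1 ha
    obtain ⟨z, hzz⟩ := hcolZ b
    obtain ⟨a', ha'ne, ha'0, ha'1⟩ := exists_other_frac (fun a => Y a b)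
      (fun a => hY0 a b) (fun a => hY1 a b) z hzz a ha0 ha1
    refine Finset.one_lt_card_iff.2 ⟨(a, b), (a', b), ?_, ?_, ?_⟩
    · exact Finset.mem_filter.2 ⟨ha, rfl⟩
    · exact Finset.mem_filter.2 ⟨(hFrac_mem _).2 ⟨ha'0, ha'1⟩, rfl⟩
    · intro h; exact ha'ne (congrArg Prod.fst h).symm
  -- touched rows and columns
  set TR : Finset (Fin (M+1)) := Finset.univ.filter (fun a => ∃ b, (a, b) ∈ Frac) with hTRdef
  set TC : Finset (Fin (N+1)) := Finset.univ.filter (fun b => ∃ a, (a, b) ∈ Frac) with hTCdef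
  have hTR_mem : ∀ a, a ∈ TR ↔ ∃ b, (a, b) ∈ Frac := by intro a; simp [hTRdef]
  have hTC_mem : ∀ b, b ∈ TC ↔ ∃ a, (a, b) ∈ Frac := by intro b; simp [hTCdef]
  have hTRne : TR.Nonempty := ⟨_, (hTR_mem _).2 ⟨_, hp0⟩⟩
  have hcard_r : 2 * TR.card ≤ Frac.card := by
    have h1 : Frac.card = ∑ a ∈ TR, (Frac.filter (fun p => p.1 = a)).card :=
      Finset.card_eq_sum_card_fiberwise (fun p hp => (hTR_mem _).2 ⟨p.2, by simpa using hp⟩)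
    rw [h1]
    calc 2 * TR.card = ∑ _a ∈ TR, 2 := by rw [Finset.sum_const, smul_eq_mul]; ring
    _ ≤ _ := Finset.sum_le_sum (fun a ha => hrow2 a ((hTR_mem a).1 ha))
  have hcard_c : 2 * TC.card ≤ Frac.card := by
    have h1 : Frac.card = ∑ b ∈ TC, (Frac.filter (fun p => p.2 = b)).card :=
      Finset.card_eq_sum_card_fiberwise (fun p hp => (hTC_mem _).2 ⟨p.1, by simpa using hp⟩)
    rw [h1]
    calc 2 * TC.card = ∑ _b ∈ TC, 2 := by rw [Finset.sum_const, smul_eq_mul]; ring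
    _ ≤ _ := Finset.sum_le_sum (fun b hb => hcol2 b ((hTC_mem b).1 hb))
  have hRC : TR.card + TC.card ≤ Frac.card := by omega
  -- the linear map recording row and column sums on the fractional support
  set Φ : ({p // p ∈ Frac} → ℝ) →ₗ[ℝ] (({a // a ∈ TR} → ℝ) × ({b // b ∈ TC} → ℝ)) :=
    { toFun := fun f =>
        (fun a => ∑ p : {p // p ∈ Frac}, if (p : Fin (M+1) × Fin (N+1)).1 = ↑a then f p else 0,
         fun b => ∑ p : {p // p ∈ Frac}, if (p : Fin (M+1) × Fin (N+1)).2 = ↑b then f p else 0),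
      map_add' := by
        intro f g
        refine Prod.ext ?_ ?_ <;> funext x <;>
          simp only [Prod.fst_add, Prod.snd_add, Pi.add_apply] <;>
          rw [← Finset.sum_add_distrib] <;>
          exact Finset.sum_congr rfl (fun p _ => by split <;> simp)
      map_smul' := by
        intro c f
        refine Prod.ext ?_ ?_ <;> funext x <;>
          simp only [RingHom.id_apply, Prod.smul_fst, Prod.smul_snd, Pi.smul_apply,
            smul_eq_mul, Finset.mul_sum, mul_ite, mul_zero] } with hPhidef
  set lam : (({a // a ∈ TR} → ℝ) × ({b // b ∈ TC} → ℝ)) →ₗ[ℝ] ℝ :=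
    { toFun := fun rc => (∑ a, rc.1 a) - (∑ b, rc.2 b),
      map_add' := by intro u v; simp only [Prod.fst_add, Prod.snd_add, Pi.add_apply, Finset.sum_add_distrib]; ring,
      map_smul' := by intro c u; simp only [Prod.smul_fst, Prod.smul_snd, Pi.smul_apply, smul_eq_mul, RingHom.id_apply, Finset.mul_sum, mul_sub] } with hlamdef
  -- the range of Φ lies in the kernel of lam
  have hsub_r : ∀ (f : {p // p ∈ Frac} → ℝ) (p : {p // p ∈ Frac}),
      (∑ a : {a // a ∈ TR}, if (p : Fin (M+1) × Fin (N+1)).1 = ↑a then f p else 0) = f p := by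
    intro f p
    rw [Finset.sum_coe_sort TR (fun a => if (p : Fin (M+1) × Fin (N+1)).1 = a then f p else 0),
      Finset.sum_ite_eq]
    rw [if_pos ((hTR_mem _).2 ⟨(p : Fin (M+1) × Fin (N+1)).2, by simpa using p.2⟩)]
  have hsub_c : ∀ (f : {p // p ∈ Frac} → ℝ) (p : {p // p ∈ Frac}),
      (∑ b : {b // b ∈ TC}, if (p : Fin (M+1) × Fin (N+1)).2 = ↑b then f p else 0) = f p := by
    intro f p
    rw [Finset.sum_coe_sort TC (fun b => if (p : Fin (M+1) × Fin (N+1)).2 = b then f p else 0),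
      Finset.sum_ite_eq]
    rw [if_pos ((hTC_mem _).2 ⟨(p : Fin (M+1) × Fin (N+1)).1, by simpa using p.2⟩)]
  have hrange : LinearMap.range Φ ≤ LinearMap.ker lam := by
    rintro _ ⟨f, rfl⟩
    simp only [LinearMap.mem_ker, hlamdef, hPhidef, LinearMap.coe_mk, AddHom.coe_mk]
    rw [Finset.sum_comm, Finset.sum_comm (γ := {b // b ∈ TC})]
    rw [sub_eq_zero]
    exact congrArg _ (funext fun p => by rw [hsub_r f p, hsub_c f p])
  -- lam is nonzero, so its kernel has codimension 1
  have hlam_ne : lam ((fun _ => 1), 0) ≠ 0 := by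
    simp only [hlamdef, LinearMap.coe_mk, AddHom.coe_mk]
    simp only [Pi.zero_apply, Finset.sum_const_zero, sub_zero, Finset.sum_const, Finset.card_univ,
      Fintype.card_coe, nsmul_eq_mul, mul_one]
    exact_mod_cast Finset.card_pos.2 hTRne |>.ne'
  have hrank_lam : Module.finrank ℝ (LinearMap.range lam) = 1 := by
    have hle : Module.finrank ℝ (LinearMap.range lam) ≤ 1 := by
      have := Submodule.finrank_le (LinearMap.range lam)
      simpa using this
    have hne : LinearMap.range lam ≠ ⊥ := by
      intro h
      have : lam ((fun _ => 1), 0) ∈ LinearMap.range lam := LinearMap.mem_range_self _ _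
      rw [h] at this
      exact hlam_ne (Submodule.mem_bot ℝ |>.1 this)
    have hpos : 0 < Module.finrank ℝ (LinearMap.range lam) := by
      rcases Nat.eq_zero_or_pos (Module.finrank ℝ (LinearMap.range lam)) with h | h
      · exact absurd (Submodule.finrank_eq_zero.1 h) hne
      · exact h
    omega
  have hker_lam : Module.finrank ℝ (LinearMap.ker lam) = TR.card + TC.card - 1 := by
    have h1 := LinearMap.finrank_range_add_finrank_ker lam
    rw [hrank_lam] at h1
    have h2 : Module.finrank ℝ (({a // a ∈ TR} → ℝ) × ({b // b ∈ TC} → ℝ))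
        = TR.card + TC.card := by
      rw [Module.finrank_prod, Module.finrank_fintype_fun_eq_card,
        Module.finrank_fintype_fun_eq_card, Fintype.card_coe, Fintype.card_coe]
    omega
  -- hence Φ has nontrivial kernel
  have hkerPhi : LinearMap.ker Φ ≠ ⊥ := by
    intro hbot
    have h1 := LinearMap.finrank_range_add_finrank_ker Φ
    rw [hbot, finrank_bot] at h1
    have h2 : Module.finrank ℝ ({p // p ∈ Frac} → ℝ) = Frac.card := by
      rw [Module.finrank_fintype_fun_eq_card, Fintype.card_coe]
    have h3 : Module.finrank ℝ (LinearMap.range Φ) ≤ TR.card + TC.card - 1 := by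
      rw [← hker_lam]
      exact Submodule.finrank_mono hrange
    have h4 : 1 ≤ TR.card := Finset.card_pos.2 hTRne
    omega
  obtain ⟨f, hfker, hfne⟩ := (Submodule.ne_bot_iff _).1 hkerPhi
  -- the perturbation matrix d
  set d : Matrix (Fin (M+1)) (Fin (N+1)) ℝ :=
    fun a b => if h : (a, b) ∈ Frac then f ⟨(a, b), h⟩ else 0 with hddef
  have hd_supp : ∀ a b, (a, b) ∉ Frac → d a b = 0 := by
    intro a b h; simp only [hddef]; rw [dif_neg h]
  have hd_eq : ∀ (p : Fin (M+1) × Fin (N+1)) (h : p ∈ Frac), d p.1 p.2 = f ⟨p, h⟩ := by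
    intro p h
    simp only [hddef, Prod.mk.eta]
    rw [dif_pos h]
  have hPhi1 : ∀ a : {a // a ∈ TR},
      ∑ p : {p // p ∈ Frac}, (if (p : Fin (M+1) × Fin (N+1)).1 = ↑a then f p else 0) = 0 := by
    intro a
    have h1 : (Φ f).1 a = 0 := by rw [LinearMap.mem_ker.1 hfker]; rfl
    simpa only [hPhidef, LinearMap.coe_mk, AddHom.coe_mk] using h1
  have hPhi2 : ∀ b : {b // b ∈ TC},
      ∑ p : {p // p ∈ Frac}, (if (p : Fin (M+1) × Fin (N+1)).2 = ↑b then f p else 0) = 0 := by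
    intro b
    have h1 : (Φ f).2 b = 0 := by rw [LinearMap.mem_ker.1 hfker]; rfl
    simpa only [hPhidef, LinearMap.coe_mk, AddHom.coe_mk] using h1
  -- row and column sums of d vanish
  have hrowd : ∀ a, ∑ b, d a b = 0 := by
    intro a
    by_cases ha : a ∈ TR
    · have h3 : ∑ p : {p // p ∈ Frac}, (if (p : Fin (M+1) × Fin (N+1)).1 = a then f p else 0)
          = ∑ p ∈ Frac, (if p.1 = a then d p.1 p.2 else 0) := by
        rw [← Finset.sum_coe_sort Frac (fun p => if p.1 = a then d p.1 p.2 else 0)]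
        refine Finset.sum_congr rfl fun p _ => ?_
        rw [hd_eq (↑p) p.2, Subtype.coe_eta]
      have h1 : ∑ p ∈ Frac, (if p.1 = a then d p.1 p.2 else 0)
          = ∑ p : Fin (M+1) × Fin (N+1), (if p.1 = a then d p.1 p.2 else 0) := by
        refine Finset.sum_subset (Finset.subset_univ Frac) ?_
        intro p _ hp
        rw [hd_supp p.1 p.2 (by rwa [Prod.mk.eta])]
        simp
      have h2 : ∑ p : Fin (M+1) × Fin (N+1), (if p.1 = a then d p.1 p.2 else 0)
          = ∑ b, d a b := by
        rw [Fintype.sum_prod_type_right]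
        refine Finset.sum_congr rfl fun b _ => ?_
        dsimp only
        rw [Finset.sum_ite_eq' Finset.univ a (fun a' => d a' b)]
        simp
      have h0 := hPhi1 ⟨a, ha⟩
      rw [← h2, ← h1, ← h3]
      exact h0
    · refine Finset.sum_eq_zero fun b _ => ?_
      exact hd_supp a b (fun hmem => ha ((hTR_mem a).2 ⟨b, hmem⟩))
  have hcold : ∀ b, ∑ a, d a b = 0 := by
    intro b
    by_cases hb : b ∈ TC
    · have h3 : ∑ p : {p // p ∈ Frac}, (if (p : Fin (M+1) × Fin (N+1)).2 = b then f p else 0)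
          = ∑ p ∈ Frac, (if p.2 = b then d p.1 p.2 else 0) := by
        rw [← Finset.sum_coe_sort Frac (fun p => if p.2 = b then d p.1 p.2 else 0)]
        refine Finset.sum_congr rfl fun p _ => ?_
        rw [hd_eq (↑p) p.2, Subtype.coe_eta]
      have h1 : ∑ p ∈ Frac, (if p.2 = b then d p.1 p.2 else 0)
          = ∑ p : Fin (M+1) × Fin (N+1), (if p.2 = b then d p.1 p.2 else 0) := by
        refine Finset.sum_subset (Finset.subset_univ Frac) ?_
        intro p _ hp
        rw [hd_supp p.1 p.2 (by rwa [Prod.mk.eta])]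
        simp
      have h2 : ∑ p : Fin (M+1) × Fin (N+1), (if p.2 = b then d p.1 p.2 else 0)
          = ∑ a, d a b := by
        rw [Fintype.sum_prod_type]
        refine Finset.sum_congr rfl fun a _ => ?_
        dsimp only
        rw [Finset.sum_ite_eq' Finset.univ b (fun b' => d a b')]
        simp
      have h0 := hPhi2 ⟨b, hb⟩
      rw [← h2, ← h1, ← h3]
      exact h0
    · refine Finset.sum_eq_zero fun a _ => ?_
      exact hd_supp a b (fun hmem => hb ((hTC_mem b).2 ⟨a, hmem⟩))
  -- d is nonzero somewhere, in fact somewhere in the X block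
  have hfex : ∃ p : {p // p ∈ Frac}, f p ≠ 0 := by
    by_contra h; push_neg at h; exact hfne (funext fun p => h p)
  obtain ⟨p₀, hp₀⟩ := hfex
  have hd_ne_p₀ : d p₀.1.1 p₀.1.2 ≠ 0 := by
    rw [hd_eq p₀.1 p₀.2, Subtype.coe_eta]; exact hp₀
  have hdlastlast : d (Fin.last M) (Fin.last N) = 0 := by
    refine hd_supp _ _ (fun hmem => ?_)
    exact ((hFrac_mem (Fin.last M, Fin.last N)).1 hmem).1 hYll
  have hdX_ne : ∃ (i : Fin M) (j : Fin N), d i.castSucc j.castSucc ≠ 0 := by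
    by_contra hcon
    push_neg at hcon
    have hrlast : ∀ i : Fin M, d i.castSucc (Fin.last N) = 0 := by
      intro i
      have h := hrowd i.castSucc
      rw [Fin.sum_univ_castSucc] at h
      have hz : ∑ j : Fin N, d i.castSucc j.castSucc = 0 :=
        Finset.sum_eq_zero fun j _ => hcon i j
      rw [hz] at h
      linarith
    have hclast : ∀ j : Fin N, d (Fin.last M) j.castSucc = 0 := by
      intro j
      have h := hcold j.castSucc
      rw [Fin.sum_univ_castSucc] at h
      have hz : ∑ i : Fin M, d i.castSucc j.castSucc = 0 :=
        Finset.sum_eq_zero fun i _ => hcon i j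
      rw [hz] at h
      linarith
    have hdall : ∀ a b, d a b = 0 := by
      intro a b
      induction a using Fin.lastCases with
      | last =>
        induction b using Fin.lastCases with
        | last => exact hdlastlast
        | cast j => exact hclast j
      | cast i =>
        induction b using Fin.lastCases with
        | last => exact hrlast i
        | cast j => exact hcon i j
    exact hd_ne_p₀ (hdall _ _)
  -- the perturbation size ε
  set ε : ℝ := Frac.inf' hFne (fun p => Y p.1 p.2 / (|d p.1 p.2| + 1)) with hedef
  have hYpos : ∀ p ∈ Frac, 0 < Y p.1 p.2 := fun p hp =>
    lt_of_le_of_ne (hY0 _ _) (Ne.symm ((hFrac_mem p).1 hp).1)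
  have hε_pos : 0 < ε := by
    rw [hedef, Finset.lt_inf'_iff]
    intro p hp
    exact div_pos (hYpos p hp) (by positivity)
  have hkey : ∀ a b, ε * |d a b| ≤ Y a b := by
    intro a b
    by_cases h : d a b = 0
    · rw [h, abs_zero, mul_zero]; exact hY0 a b
    · have hmem : (a, b) ∈ Frac := by
        by_contra hm; exact h (hd_supp a b hm)
      have h1 : ε ≤ Y a b / (|d a b| + 1) := Finset.inf'_le _ hmem
      have h2 : (0:ℝ) < |d a b| + 1 := by positivity
      calc ε * |d a b| ≤ (Y a b / (|d a b| + 1)) * |d a b| :=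
            mul_le_mul_of_nonneg_right h1 (abs_nonneg _)
        _ ≤ (Y a b / (|d a b| + 1)) * (|d a b| + 1) := by
            exact mul_le_mul_of_nonneg_left (by linarith) (div_nonneg (hY0 a b) h2.le)
        _ = Y a b := div_mul_cancel₀ _ h2.ne'
  have hplus : ∀ a b, 0 ≤ Y a b + ε * d a b := by
    intro a b
    have h1 := hkey a b
    have h2 : ε * -(|d a b|) ≤ ε * d a b := mul_le_mul_of_nonneg_left (neg_abs_le _) hε_pos.le
    rw [mul_neg] at h2
    linarith
  have hminus : ∀ a b, 0 ≤ Y a b - ε * d a b := by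
    intro a b
    have h1 := hkey a b
    have h2 : ε * d a b ≤ ε * |d a b| := mul_le_mul_of_nonneg_left (le_abs_self _) hε_pos.le
    linarith
  -- the perturbation restricted to the X block
  set dX : Matrix (Fin M) (Fin N) ℝ := fun i j => d i.castSucc j.castSucc with hdXdef
  have hrow_dX : ∀ i, ∑ j, dX i j = - d i.castSucc (Fin.last N) := by
    intro i
    have h := hrowd i.castSucc
    rw [Fin.sum_univ_castSucc] at h
    simp only [hdXdef]
    linarith
  have hcol_dX : ∀ j, ∑ i, dX i j = - d (Fin.last M) j.castSucc := by
    intro j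
    have h := hcold j.castSucc
    rw [Fin.sum_univ_castSucc] at h
    simp only [hdXdef]
    linarith
  have hclast0 : ∑ i : Fin M, d i.castSucc (Fin.last N) = 0 := by
    have h := hcold (Fin.last N)
    rw [Fin.sum_univ_castSucc, hdlastlast] at h
    linarith
  have htot_dX : ∑ i, ∑ j, dX i j = 0 := by
    calc ∑ i, ∑ j, dX i j = ∑ i, -(d i.castSucc (Fin.last N)) :=
          Finset.sum_congr rfl fun i _ => hrow_dX i
      _ = -(∑ i : Fin M, d i.castSucc (Fin.last N)) := by
          rw [← Finset.sum_neg_distrib]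
      _ = 0 := by rw [hclast0, neg_zero]
  -- the two perturbed matrices lie in D
  have hmem_plus : X + ε • dX ∈ DSet L M N := by
    refine ⟨?_, ?_, ?_, ?_⟩
    · intro i j
      have h := hplus i.castSucc j.castSucc
      rw [hY11] at h
      simp only [Matrix.add_apply, Matrix.smul_apply, smul_eq_mul]
      simpa [hdXdef] using h
    · intro i
      have hsum : ∑ j, (X + ε • dX) i j = (∑ j, X i j) + ε * ∑ j, dX i j := by
        simp [Matrix.add_apply, Matrix.smul_apply, smul_eq_mul, Finset.sum_add_distrib,
          Finset.mul_sum]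
      rw [hsum, hrow_dX i]
      have h := hplus i.castSucc (Fin.last N)
      rw [hY1l] at h
      linarith
    · intro j
      have hsum : ∑ i, (X + ε • dX) i j = (∑ i, X i j) + ε * ∑ i, dX i j := by
        simp [Matrix.add_apply, Matrix.smul_apply, smul_eq_mul, Finset.sum_add_distrib,
          Finset.mul_sum]
      rw [hsum, hcol_dX j]
      have h := hplus (Fin.last M) j.castSucc
      rw [hYl1] at h
      linarith
    · have hsum : ∑ i, ∑ j, (X + ε • dX) i j
          = (∑ i, ∑ j, X i j) + ε * ∑ i, ∑ j, dX i j := by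
        simp [Matrix.add_apply, Matrix.smul_apply, smul_eq_mul, Finset.sum_add_distrib,
          Finset.mul_sum]
      rw [hsum, htot_dX, htot]
      ring
  have hmem_minus : X - ε • dX ∈ DSet L M N := by
    refine ⟨?_, ?_, ?_, ?_⟩
    · intro i j
      have h := hminus i.castSucc j.castSucc
      rw [hY11] at h
      simp only [Matrix.sub_apply, Matrix.smul_apply, smul_eq_mul]
      simpa [hdXdef] using h
    · intro i
      have hsum : ∑ j, (X - ε • dX) i j = (∑ j, X i j) - ε * ∑ j, dX i j := by
        simp [Matrix.sub_apply, Matrix.smul_apply, smul_eq_mul, Finset.sum_sub_distrib,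
          Finset.mul_sum]
      rw [hsum, hrow_dX i]
      have h := hminus i.castSucc (Fin.last N)
      rw [hY1l] at h
      linarith
    · intro j
      have hsum : ∑ i, (X - ε • dX) i j = (∑ i, X i j) - ε * ∑ i, dX i j := by
        simp [Matrix.sub_apply, Matrix.smul_apply, smul_eq_mul, Finset.sum_sub_distrib,
          Finset.mul_sum]
      rw [hsum, hcol_dX j]
      have h := hminus (Fin.last M) j.castSucc
      rw [hYl1] at h
      linarith
    · have hsum : ∑ i, ∑ j, (X - ε • dX) i j
          = (∑ i, ∑ j, X i j) - ε * ∑ i, ∑ j, dX i j := by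
        simp [Matrix.sub_apply, Matrix.smul_apply, smul_eq_mul, Finset.sum_sub_distrib,
          Finset.mul_sum]
      rw [hsum, htot_dX, htot]
      ring
  -- conclude
  intro hext
  rw [mem_extremePoints] at hext
  obtain ⟨-, hkey2⟩ := hext
  obtain ⟨i1, j1, hd1⟩ := hdX_ne
  have hseg : X ∈ openSegment ℝ (X - ε • dX) (X + ε • dX) := by
    refine ⟨1/2, 1/2, by norm_num, by norm_num, by norm_num, ?_⟩
    ext i j
    simp [Matrix.add_apply, Matrix.sub_apply, Matrix.smul_apply, smul_eq_mul]
    ring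
  obtain ⟨h2, -⟩ := hkey2 _ hmem_minus _ hmem_plus hseg
  have h3 := congrFun (congrFun h2 i1) j1
  simp only [Matrix.sub_apply, Matrix.smul_apply, smul_eq_mul] at h3
  simp only [hdXdef] at h3
  have h4 : ε * d i1.castSucc j1.castSucc = 0 := by linarith
  rcases mul_eq_zero.1 h4 with h | h
  · exact hε_pos.ne' h
  · exact hd1 h

/-- The set of extreme points of `D` is exactly `P`. -/
theorem extremePoints_DSet_eq_PPM (L M N : ℕ)
    (hL : 0 < L) (hLM : L ≤ M) (hMN : M ≤ N) :
    Set.extremePoints ℝ (DSet L M N) = PPM L M N := by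
  ext X
  constructor
  · intro hX
    have hXD : X ∈ DSet L M N := extremePoints_subset hX
    obtain ⟨hpos, hr, hc, ht⟩ := hXD
    refine ⟨?_, hr, hc, ht⟩
    intro i j
    by_contra h
    push_neg at h
    exact not_extremePoint_of_frac ⟨hpos, hr, hc, ht⟩ h.1 h.2 hX
  · intro hX
    obtain ⟨h01, hr, hc, ht⟩ := hX
    have hpos : ∀ i j, 0 ≤ X i j := by
      intro i j; rcases h01 i j with h | h <;> rw [h] <;> norm_num
    have hXD : X ∈ DSet L M N := ⟨hpos, hr, hc, ht⟩
    rw [mem_extremePoints]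
    refine ⟨hXD, ?_⟩
    rintro x₁ hx₁ x₂ hx₂ ⟨a, b, ha, hb, hab, hsum⟩
    have bound : ∀ (x : Matrix (Fin M) (Fin N) ℝ), x ∈ DSet L M N →
        ∀ i j, 0 ≤ x i j ∧ x i j ≤ 1 := by
      intro x hx i j
      exact ⟨hx.1 i j, le_trans (Finset.single_le_sum (fun j' _ => hx.1 i j')
        (Finset.mem_univ j)) (hx.2.1 i)⟩
    have hent : ∀ i j, x₁ i j = X i j ∧ x₂ i j = X i j := by
      intro i j
      have h1 : a * x₁ i j + b * x₂ i j = X i j := by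
        have h0 := congrFun (congrFun hsum i) j
        simpa [Matrix.add_apply, Matrix.smul_apply, smul_eq_mul] using h0
      obtain ⟨hb₁0, hb₁1⟩ := bound x₁ hx₁ i j
      obtain ⟨hb₂0, hb₂1⟩ := bound x₂ hx₂ i j
      rcases h01 i j with h | h
      · rw [h] at h1 ⊢
        constructor
        · nlinarith
        · nlinarith
      · rw [h] at h1 ⊢
        constructor
        · nlinarith
        · nlinarith
    constructor
    · ext i j; exact (hent i j).1
    · ext i j; exact (hent i j).2
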